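/- Let 0 ≤ μ ≤ 1. For all positive invertible operators (or positive definite matrices) A and B, the identity A∇_μB - A!_μB = μ(1-μ)(A - B)(B∇_μA)^{-1}(A - B) holds, where A∇_μB = (1-μ)A + μB and A!_μB = ((1-μ)A^{-1} + μB^{-1})^{-1}. -/

import Mathlib

open Matrix ComplexOrder

/-- Matrix square root via the real continuous functional calculus. -/
noncomputable def msqrt {n : ℕ} (A : Matrix (Fin n) (Fin n) ℂ) :
    Matrix (Fin n) (Fin n) ℂ :=
  cfc Real.sqrt A

/-- The Kubo–Ando mean associated to a representing function `f`:
`A σ_f B = A^{1/2} f(A^{-1/2} B A^{-1/2}) A^{1/2}`. -/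
noncomputable def opMean {n : ℕ} (f : ℝ → ℝ) (A B : Matrix (Fin n) (Fin n) ℂ) :
    Matrix (Fin n) (Fin n) ℂ :=
  msqrt A * cfc f ((msqrt A)⁻¹ * B * (msqrt A)⁻¹) * msqrt A

/-- A function `f : ℝ → ℝ` is operator monotone on `[0,∞)` if it is monotone for the
Löwner order on positive semidefinite matrices of every size. -/
def OperatorMonotone (f : ℝ → ℝ) : Prop :=
  ∀ (n : ℕ) (A B : Matrix (Fin n) (Fin n) ℂ), A.PosSemidef → B.PosSemidef →
    (B - A).PosSemidef → (cfc f B - cfc f A).PosSemidef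

lemma smul_psd {n : ℕ} {M : Matrix (Fin n) (Fin n) ℂ} (h : M.PosSemidef) {r : ℝ} (hr : 0 ≤ r) :
    (r • M).PosSemidef := by
  refine ⟨?_, fun x => ?_⟩
  · unfold Matrix.IsHermitian
    rw [conjTranspose_smul, h.1, star_trivial]
  · simpa [Finsupp.mul_sum, mul_assoc, mul_left_comm] using smul_nonneg hr (h.2 x)

lemma smul_pd {n : ℕ} {M : Matrix (Fin n) (Fin n) ℂ} (h : M.PosDef) {r : ℝ} (hr : 0 < r) :
    (r • M).PosDef := by
  refine ⟨?_, fun x hx => ?_⟩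
  · unfold Matrix.IsHermitian
    rw [conjTranspose_smul, h.1, star_trivial]
  · simpa [Finsupp.mul_sum, mul_assoc, mul_left_comm] using smul_pos hr (h.2 hx)


/-- `A∇_μB - A!_μB = μ(1-μ)(A-B)(B∇_μA)⁻¹(A-B)` for positive definite `A, B`. -/
theorem arith_harm_difference_identity (n : ℕ) (μ : ℝ) (hμ0 : 0 ≤ μ) (hμ1 : μ ≤ 1)
    (A B : Matrix (Fin n) (Fin n) ℂ) (hA : A.PosDef) (hB : B.PosDef) :
    ((1 - μ) • A + μ • B) - ((1 - μ) • A⁻¹ + μ • B⁻¹)⁻¹ =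
      (μ * (1 - μ)) • ((A - B) * ((1 - μ) • B + μ • A)⁻¹ * (A - B)) := by
  set P : Matrix (Fin n) (Fin n) ℂ := (1 - μ) • B + μ • A with hP
  have hPd : P.PosDef := by
    rcases eq_or_lt_of_le hμ1 with h1 | h1
    · subst h1; simpa [hP] using hA
    · exact (smul_pd hB (by linarith)).add_posSemidef (smul_psd hA.posSemidef hμ0)
  letI := hA.isUnit.invertible
  letI := hB.isUnit.invertible
  letI := hPd.isUnit.invertible
  have h1 : (1 - μ) • A⁻¹ + μ • B⁻¹ = A⁻¹ * P * B⁻¹ := by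
    simp [hP, Matrix.mul_add, Matrix.add_mul, Matrix.mul_smul, Matrix.smul_mul, mul_assoc,
      Matrix.mul_inv_cancel_left_of_invertible, Matrix.inv_mul_cancel_left_of_invertible,
      Matrix.mul_inv_of_invertible, Matrix.inv_mul_of_invertible]
  have h2 : (1 - μ) • A⁻¹ + μ • B⁻¹ = B⁻¹ * P * A⁻¹ := by
    simp [hP, Matrix.mul_add, Matrix.add_mul, Matrix.mul_smul, Matrix.smul_mul, mul_assoc,
      Matrix.mul_inv_cancel_left_of_invertible, Matrix.inv_mul_cancel_left_of_invertible,
      Matrix.mul_inv_of_invertible, Matrix.inv_mul_of_invertible]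
  have hinv1 : ((1 - μ) • A⁻¹ + μ • B⁻¹)⁻¹ = B * P⁻¹ * A := by
    rw [h1, Matrix.mul_inv_rev, Matrix.mul_inv_rev, Matrix.inv_inv_of_invertible,
      Matrix.inv_inv_of_invertible, mul_assoc]
  have hinv2 : ((1 - μ) • A⁻¹ + μ • B⁻¹)⁻¹ = A * P⁻¹ * B := by
    rw [h2, Matrix.mul_inv_rev, Matrix.mul_inv_rev, Matrix.inv_inv_of_invertible,
      Matrix.inv_inv_of_invertible, mul_assoc]
  have hcomm : A * P⁻¹ * B = B * P⁻¹ * A := hinv2.symm.trans hinv1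
  rw [hinv1]
  have keyA : A * P⁻¹ * P = (1 - μ) • (A * P⁻¹ * B) + μ • (A * P⁻¹ * A) := by
    rw [hP]
    simp [Matrix.mul_add, Matrix.mul_smul, Matrix.mul_assoc]
  have keyB : B * P⁻¹ * P = (1 - μ) • (B * P⁻¹ * B) + μ • (B * P⁻¹ * A) := by
    rw [hP]
    simp [Matrix.mul_add, Matrix.mul_smul, Matrix.mul_assoc]
  have hA' : A = (1 - μ) • (A * P⁻¹ * B) + μ • (A * P⁻¹ * A) :=
    (Matrix.inv_mul_cancel_right_of_invertible P A).symm.trans keyA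
  have hB' : B = (1 - μ) • (B * P⁻¹ * B) + μ • (B * P⁻¹ * A) :=
    (Matrix.inv_mul_cancel_right_of_invertible P B).symm.trans keyB
  simp only [Matrix.sub_mul, Matrix.mul_sub]
  set E := A * P⁻¹ * A with hE
  set F := A * P⁻¹ * B with hF
  set G := B * P⁻¹ * A with hG
  set H := B * P⁻¹ * B with hH
  rw [hA', hB', hcomm]
  module
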